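/- Let θ, σ : [s₀, s₁) → ℝ solve θ' = -θ²/2 - σ² - r(s), σ' = -θσ + c(s), where r(s) ≥ 0, and suppose there exists s* and ε > 0 with σ(s)² ≥ ε for all s ≥ s*. Then θ cannot remain nonnegative for all s ≥ s*: there exists s' ≥ s* with θ(s') < 0. Consequently (by the focusing lemma) θ → -∞ within finite further parameter distance 2/|θ(s')|. -/

import Mathlib

open Set

/-- Shear-driven focusing: if `θ' = -θ²/2 - σ² - r` and `σ' = -θσ + c` with
`r ≥ 0`, and `σ² ≥ ε > 0` from some parameter `s*` on, then `θ` cannot remain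
nonnegative for all `s ≥ s*`: there is `s' ≥ s*` with `θ(s') < 0` (after which,
by the focusing lemma, `θ → -∞` within parameter distance `2/|θ(s')|`). -/
theorem stmt_16 (θ σ r c : ℝ → ℝ) (s₀ sstar ε : ℝ) (hs : s₀ ≤ sstar) (hε : 0 < ε)
    (hθ : ∀ s ∈ Ici s₀, HasDerivAt θ (-(θ s) ^ 2 / 2 - (σ s) ^ 2 - r s) s)
    (hσ : ∀ s ∈ Ici s₀, HasDerivAt σ (-(θ s) * σ s + c s) s)
    (hr : ∀ s, 0 ≤ r s)
    (hshear : ∀ s ∈ Ici sstar, ε ≤ (σ s) ^ 2) :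
    ∃ s' ∈ Ici sstar, θ s' < 0 := by
  by_contra h
  push_neg at h
  -- g s = θ s + ε s is antitone on Ici sstar
  set g : ℝ → ℝ := fun s => θ s + ε * s with hg
  have hderiv : ∀ x ∈ Ici sstar, HasDerivAt g
      (-(θ x) ^ 2 / 2 - (σ x) ^ 2 - r x + ε) x := by
    intro x hx
    have := (hθ x (le_trans hs hx)).add ((hasDerivAt_id x).const_mul ε)
    simp only [mul_one] at this
    exact this
  have hanti : AntitoneOn g (Ici sstar) := by
    refine antitoneOn_of_deriv_nonpos (convex_Ici sstar) ?_ ?_ ?_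
    · exact fun x hx => (hderiv x hx).continuousAt.continuousWithinAt
    · intro x hx
      rw [interior_Ici] at hx
      exact (hderiv x (mem_Ici.mpr (le_of_lt hx))).differentiableAt.differentiableWithinAt
    · intro x hx
      rw [interior_Ici] at hx
      rw [(hderiv x (mem_Ici.mpr (le_of_lt hx))).deriv]
      have h1 := hshear x (mem_Ici.mpr (le_of_lt hx))
      have h2 := hr x
      nlinarith [sq_nonneg (θ x)]
  set T : ℝ := sstar + (θ sstar + 1) / ε with hT
  have hθ0 : 0 ≤ θ sstar := h sstar self_mem_Ici
  have hTge : sstar ≤ T := by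
    have h2 : 0 ≤ (θ sstar + 1) / ε := by positivity
    rw [hT]; linarith
  have := hanti (self_mem_Ici) hTge hTge
  have hθT : 0 ≤ θ T := h T hTge
  have hεT : ε * T = ε * sstar + (θ sstar + 1) := by
    rw [hT]; field_simp
  simp only [hg] at this
  rw [hεT] at this
  linarith
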